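/- Let $1 \le k \le n$, let $A$ be a Hermitian $n\times n$ complex matrix belonging to the G\u00e5rding cone $\Gamma_k^+$, and let $C$ be a Hermitian positive semidefinite $n\times n$ matrix. Then $A + C$ also belongs to $\Gamma_k^+$, i.e. $\sigma_j(A+C) > 0$ for all $1 \le j \le k$. -/

import Mathlib

open Matrix Polynomial
open scoped ComplexOrder

/-- The `k`-th elementary symmetric function of a finite family of reals. -/
noncomputable def esymmR {ι : Type*} [Fintype ι] (k : ℕ) (lam : ι → ℝ) : ℝ :=
  ∑ s ∈ Finset.univ.powersetCard k, ∏ i ∈ s, lam i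

/-- `σ_k(A)`: the `k`-th elementary symmetric function of the (real) eigenvalues of a
Hermitian matrix `A`. -/
noncomputable def sigmaH {n : ℕ} {A : Matrix (Fin n) (Fin n) ℂ}
    (hA : A.IsHermitian) (k : ℕ) : ℝ :=
  esymmR k hA.eigenvalues

/-- `T_k(A)`: the `k`-th Newton transformation of a Hermitian matrix `A`,
`T_k(A) = ∑_{j=0}^k (-1)^j σ_{k-j}(A) A^j`. -/
noncomputable def newtonH {n : ℕ} {A : Matrix (Fin n) (Fin n) ℂ}
    (hA : A.IsHermitian) (k : ℕ) : Matrix (Fin n) (Fin n) ℂ :=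
  ∑ j ∈ Finset.range (k + 1), ((-1 : ℂ) ^ j * (sigmaH hA (k - j) : ℂ)) • A ^ j

namespace GardingAux

lemma sigmaH_eq_esymm {n : ℕ} {A : Matrix (Fin n) (Fin n) ℂ} (hA : A.IsHermitian) (k : ℕ) :
    sigmaH hA k = (Multiset.map hA.eigenvalues Finset.univ.val).esymm k := by
  rw [sigmaH, esymmR, Finset.esymm_map_val]

/-! ### Multiset elementary symmetric function basics -/

lemma esymm_zero' (s : Multiset ℝ) : s.esymm 0 = 1 := by
  simp [Multiset.esymm, Multiset.powersetCard_zero_left]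

lemma esymm_cons (a : ℝ) (t : Multiset ℝ) (j : ℕ) :
    (a ::ₘ t).esymm (j + 1) = t.esymm (j + 1) + a * t.esymm j := by
  rw [Multiset.esymm, Multiset.powersetCard_cons, Multiset.map_add, Multiset.sum_add,
    Multiset.map_map]
  congr 1
  rw [Multiset.esymm, ← Multiset.sum_map_mul_left]
  apply congrArg
  apply Multiset.map_congr rfl
  intro u _
  simp [Multiset.prod_cons]

lemma sum_pos_of_pos (s : Multiset ℝ) (h : ∀ x ∈ s, 0 < x) (hs : s ≠ 0) : 0 < s.sum := by
  induction s using Multiset.induction with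
  | empty => exact absurd rfl hs
  | cons a t ih =>
    rw [Multiset.sum_cons]
    rcases eq_or_ne t 0 with rfl | ht
    · simpa using h a (Multiset.mem_cons_self a 0)
    · have := ih (fun x hx => h x (Multiset.mem_cons_of_mem hx)) ht
      have ha := h a (Multiset.mem_cons_self a t)
      linarith

lemma prod_pos_of_pos (s : Multiset ℝ) (h : ∀ x ∈ s, 0 < x) : 0 < s.prod := by
  induction s using Multiset.induction with
  | empty => simp
  | cons a t ih =>
    rw [Multiset.prod_cons]
    exact mul_pos (h a (Multiset.mem_cons_self a t))
      (ih fun x hx => h x (Multiset.mem_cons_of_mem hx))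

lemma esymm_pos_of_pos (t : Multiset ℝ) (ht : ∀ x ∈ t, 0 < x) {j : ℕ}
    (hj : j ≤ Multiset.card t) : 0 < t.esymm j := by
  rw [Multiset.esymm]
  apply sum_pos_of_pos
  · intro x hx
    rw [Multiset.mem_map] at hx
    obtain ⟨u, hu, rfl⟩ := hx
    rw [Multiset.mem_powersetCard] at hu
    exact prod_pos_of_pos u (fun y hy => ht y (Multiset.mem_of_le hu.1 hy))
  · intro hzero
    have hc := congrArg Multiset.card hzero
    rw [Multiset.card_map, Multiset.card_powersetCard, Multiset.card_zero] at hc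
    exact (Nat.choose_pos hj).ne' hc

/-! ### the polynomial ∏ (X + λᵢ) -/

noncomputable def pm (s : Multiset ℝ) : ℝ[X] := (Multiset.map (fun r => X + C r) s).prod

lemma pm_eq (s : Multiset ℝ) :
    pm s = (Multiset.map (fun r => X - C r) (s.map (fun r => -r))).prod := by
  rw [pm, Multiset.map_map]
  congr 1
  apply Multiset.map_congr rfl
  intro x _
  simp [sub_neg_eq_add]

lemma roots_pm (s : Multiset ℝ) : (pm s).roots = s.map (fun r => -r) := by
  rw [pm_eq]
  exact roots_multiset_prod_X_sub_C _

lemma card_roots_pm (s : Multiset ℝ) : Multiset.card (pm s).roots = Multiset.card s := by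
  rw [roots_pm, Multiset.card_map]

lemma natDegree_pm (s : Multiset ℝ) : (pm s).natDegree = Multiset.card s := by
  rw [pm_eq, natDegree_multiset_prod_X_sub_C_eq_card, Multiset.card_map]

lemma coeff_pm (s : Multiset ℝ) {m : ℕ} (hm : m ≤ Multiset.card s) :
    (pm s).coeff m = s.esymm (Multiset.card s - m) :=
  Multiset.prod_X_add_C_coeff s hm

lemma coeff_pm_zero_of_gt (s : Multiset ℝ) {m : ℕ} (hm : Multiset.card s < m) :
    (pm s).coeff m = 0 :=
  coeff_eq_zero_of_natDegree_lt (by rwa [natDegree_pm])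

lemma pm_cons (a : ℝ) (t : Multiset ℝ) : pm (a ::ₘ t) = (X + C a) * pm t := by
  rw [pm, Multiset.map_cons, Multiset.prod_cons, pm]

/-! ### eval positivity / monotonicity from coefficients -/

lemma eval_pos_of_coeff (p : ℝ[X]) {x : ℝ} (hx : 0 ≤ x)
    (h0 : 0 < p.coeff 0) (h : ∀ m, 0 ≤ p.coeff m) : 0 < p.eval x := by
  rw [eval_eq_sum_range, Finset.sum_range_succ']
  have hnn : 0 ≤ ∑ i ∈ Finset.range p.natDegree, p.coeff (i + 1) * x ^ (i + 1) := by
    apply Finset.sum_nonneg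
    intro i _
    exact mul_nonneg (h _) (pow_nonneg hx _)
  simpa using by linarith [hnn]

lemma eval_mono_of_coeff (p : ℝ[X]) {x y : ℝ} (hx : 0 ≤ x) (hxy : x ≤ y)
    (h : ∀ m, 1 ≤ m → 0 ≤ p.coeff m) : p.eval x ≤ p.eval y := by
  rw [eval_eq_sum_range, eval_eq_sum_range]
  apply Finset.sum_le_sum
  intro i _
  match i with
  | 0 => simp
  | (i + 1) =>
    exact mul_le_mul_of_nonneg_left (pow_le_pow_left₀ hx hxy _) (h _ (Nat.succ_le_succ (Nat.zero_le _)))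

lemma exists_nonneg_root (g : ℝ[X]) (h0 : g.eval 0 ≤ 0) (hdeg : 0 < g.degree)
    (hlead : 0 ≤ g.leadingCoeff) : ∃ r, 0 ≤ r ∧ g.eval r = 0 := by
  have htt := Polynomial.tendsto_atTop_of_leadingCoeff_nonneg g hdeg hlead
  obtain ⟨T, hT⟩ := ((htt.eventually_ge_atTop 0).and (Filter.eventually_ge_atTop (0:ℝ))).exists
  have hsub := intermediate_value_Icc hT.2 ((Polynomial.continuous g).continuousOn (s := Set.Icc 0 T))
  have h0mem : (0:ℝ) ∈ Set.Icc (g.eval 0) (g.eval T) := ⟨h0, hT.1⟩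
  obtain ⟨r, hrIcc, hgr⟩ := hsub h0mem
  exact ⟨r, hrIcc.1, hgr⟩

/-! ### iterated derivative helpers -/

lemma card_roots_iterate (p : ℝ[X]) (m : ℕ) :
    Multiset.card p.roots ≤ Multiset.card (derivative^[m] p).roots + m := by
  induction m with
  | zero => simp
  | succ m ih =>
    show Multiset.card p.roots ≤ Multiset.card (derivative^[m+1] p).roots + (m+1)
    rw [Function.iterate_succ_apply' derivative m p]
    have h2 := Polynomial.card_roots_le_derivative (derivative^[m] p)
    omega

lemma iterate_derivative_linear_mul (a : ℝ) (p : ℝ[X]) (m : ℕ) :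
    derivative^[m + 1] ((X + C a) * p)
      = (X + C a) * derivative^[m + 1] p + ((m : ℝ[X]) + 1) * derivative^[m] p := by
  induction m with
  | zero =>
    simp [derivative_mul]
    ring
  | succ m ih =>
    rw [Function.iterate_succ_apply' derivative (m+1), ih, derivative_add, derivative_mul,
      derivative_mul, Function.iterate_succ_apply' derivative (m+1),
      Function.iterate_succ_apply' derivative m]
    simp [derivative_add, derivative_X, derivative_C]
    push_cast
    ring

/-- F4: positivity of a real-rooted polynomial and its derivative strictly
to the right of all roots. -/
lemma eval_prod_pos_and_deriv (x : ℝ) (m : Multiset ℝ) (hm : ∀ ρ ∈ m, ρ < x)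
    (c : ℝ) (hc : 0 < c) :
    0 < eval x (C c * (m.map (fun ρ => X - C ρ)).prod) ∧
      (m ≠ 0 → 0 < eval x (derivative (C c * (m.map (fun ρ => X - C ρ)).prod))) := by
  induction m using Multiset.induction with
  | empty => simpa using hc
  | cons ρ t ih =>
    have hfac : C c * ((ρ ::ₘ t).map (fun ρ => X - C ρ)).prod
        = (X - C ρ) * (C c * (t.map (fun ρ => X - C ρ)).prod) := by
      rw [Multiset.map_cons, Multiset.prod_cons]; ring
    have hρ : ρ < x := hm ρ (Multiset.mem_cons_self ρ t)
    have iht := ih (fun y hy => hm y (Multiset.mem_cons_of_mem hy))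
    set q : ℝ[X] := C c * (t.map (fun ρ => X - C ρ)).prod with hq
    have hqx : 0 < q.eval x := iht.1
    constructor
    · rw [hfac]
      simp only [eval_mul, eval_sub, eval_X, eval_C]
      exact mul_pos (by linarith) hqx
    · intro _
      rw [hfac, derivative_mul]
      simp only [derivative_sub, derivative_X, derivative_C, sub_zero, eval_add, eval_mul,
        eval_one, one_mul, eval_sub, eval_X, eval_C]
      have hq' : 0 ≤ eval x (derivative q) := by
        rcases eq_or_ne t 0 with rfl | ht
        · simp [hq]
        · exact le_of_lt (iht.2 ht)
      nlinarith


lemma key_step (k : ℕ) (hk1 : 1 ≤ k) (a : ℝ) (t : Multiset ℝ)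
    (hcard : k + 1 ≤ Multiset.card t)
    (hG : ∀ j, 1 ≤ j → j ≤ k + 1 → 0 < (a ::ₘ t).esymm j)
    (hIH : ∀ j, j ≤ k - 1 → 0 < t.esymm j) :
    0 < t.esymm k := by
  by_contra hneg
  push_neg at hneg
  set m0 := Multiset.card t - (k + 1) with hm0
  set G : ℝ[X] := pm t with hGdef
  set hh : ℝ[X] := derivative^[m0] G with hhdef
  set g : ℝ[X] := derivative^[m0 + 1] G with hgdef
  have hgh : g = derivative hh := by
    rw [hgdef, hhdef, Function.iterate_succ_apply' derivative m0 G]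
  have hGdeg : G.natDegree = Multiset.card t := natDegree_pm t
  have hGcoeff : ∀ m, m ≤ Multiset.card t → G.coeff m = t.esymm (Multiset.card t - m) :=
    fun m hm => coeff_pm t hm
  have hcoeffg : ∀ m, g.coeff m
      = ((m + (m0 + 1)).descFactorial (m0 + 1) : ℝ) * G.coeff (m + (m0 + 1)) := by
    intro m
    rw [hgdef, Polynomial.coeff_iterate_derivative, nsmul_eq_mul]
  have hcoeffh : ∀ m, hh.coeff m
      = ((m + m0).descFactorial m0 : ℝ) * G.coeff (m + m0) := by
    intro m
    rw [hhdef, Polynomial.coeff_iterate_derivative, nsmul_eq_mul]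
  -- coefficients of g
  have hg0 : g.coeff 0 ≤ 0 := by
    rw [hcoeffg 0, hGcoeff _ (by omega)]
    have he : Multiset.card t - (0 + (m0 + 1)) = k := by omega
    rw [he]
    exact mul_nonpos_of_nonneg_of_nonpos (by positivity) hneg
  have hgm : ∀ m, 1 ≤ m → 0 ≤ g.coeff m := by
    intro m hm
    rw [hcoeffg m]
    rcases Nat.lt_or_ge (Multiset.card t) (m + (m0 + 1)) with hbig | hsmall
    · rw [coeff_eq_zero_of_natDegree_lt (by omega : G.natDegree < m + (m0+1))]
      simp
    · rw [hGcoeff _ hsmall]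
      exact mul_nonneg (by positivity) (le_of_lt (hIH _ (by omega)))
  have hgk : g.coeff k = ((k + (m0 + 1)).descFactorial (m0 + 1) : ℝ) := by
    rw [hcoeffg k, hGcoeff _ (by omega)]
    have he : Multiset.card t - (k + (m0+1)) = 0 := by omega
    rw [he, esymm_zero', mul_one]
  have hgkpos : 0 < g.coeff k := by
    rw [hgk]
    have : 0 < (k + (m0+1)).descFactorial (m0+1) := Nat.pos_of_ne_zero (fun hdz => by have := Nat.descFactorial_eq_zero_iff_lt.mp hdz; omega)
    exact_mod_cast this
  have hgdeg : g.natDegree = k := by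
    have h1 := natDegree_iterate_derivative G (m0 + 1)
    rw [← hgdef, hGdeg] at h1
    exact le_antisymm (by omega) (le_natDegree_of_ne_zero (ne_of_gt hgkpos))
  -- coefficients and roots of hh
  have hhk1 : 0 < hh.coeff (k+1) := by
    rw [hcoeffh (k+1), hGcoeff _ (by omega)]
    have he : Multiset.card t - (k + 1 + m0) = 0 := by omega
    rw [he, esymm_zero', mul_one]
    have : 0 < (k + 1 + m0).descFactorial m0 := Nat.pos_of_ne_zero (fun hdz => by have := Nat.descFactorial_eq_zero_iff_lt.mp hdz; omega)
    exact_mod_cast this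
  have hhdeg : hh.natDegree = k + 1 := by
    have h1 := natDegree_iterate_derivative G m0
    rw [← hhdef, hGdeg] at h1
    exact le_antisymm (by omega) (le_natDegree_of_ne_zero (ne_of_gt hhk1))
  have hhlead : 0 < hh.leadingCoeff := by
    rw [Polynomial.leadingCoeff, hhdeg]; exact hhk1
  have hhroots : Multiset.card hh.roots = k + 1 := by
    have h1 := card_roots_iterate G m0
    rw [← hhdef] at h1
    rw [hGdef, card_roots_pm] at h1
    have h2 := Polynomial.card_roots' hh
    rw [hhdeg] at h2
    omega
  -- a nonnegative root of g
  have hgdegpos : 0 < g.degree := natDegree_pos_iff_degree_pos.mp (by omega)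
  have hglead : 0 ≤ g.leadingCoeff := by
    rw [Polynomial.leadingCoeff, hgdeg]; exact le_of_lt hgkpos
  have hg0' : g.eval 0 ≤ 0 := by rw [← coeff_zero_eq_eval_zero]; exact hg0
  obtain ⟨r, hr0, hgr⟩ := exists_nonneg_root g hg0' hgdegpos hglead
  -- q = derivative^[m0+1] (pm (a ::ₘ t))
  set P : ℝ[X] := pm (a ::ₘ t) with hPdef
  set q : ℝ[X] := derivative^[m0+1] P with hqdef
  have hqsplit : q = (X + C a) * g + ((m0 : ℝ[X]) + 1) * hh := by
    rw [hqdef, hgdef, hhdef, hGdef, hPdef, pm_cons]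
    exact iterate_derivative_linear_mul a (pm t) m0
  have hqc : ∀ m, m + (m0+1) ≤ Multiset.card t + 1 →
      q.coeff m = ((m + (m0+1)).descFactorial (m0+1) : ℝ) * (a ::ₘ t).esymm (k + 1 - m) := by
    intro m hm
    rw [hqdef, Polynomial.coeff_iterate_derivative, nsmul_eq_mul, hPdef,
      coeff_pm _ (by rw [Multiset.card_cons]; omega)]
    have he : Multiset.card (a ::ₘ t) - (m + (m0+1)) = k + 1 - m := by
      rw [Multiset.card_cons]; omega
    rw [he]
  have hqpos : 0 < q.eval r := by
    apply eval_pos_of_coeff q hr0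
    · rw [hqc 0 (by omega)]
      have he : k + 1 - 0 = k + 1 := by omega
      rw [he]
      have hd : 0 < (0 + (m0+1)).descFactorial (m0+1) := Nat.pos_of_ne_zero (fun hdz => by have := Nat.descFactorial_eq_zero_iff_lt.mp hdz; omega)
      exact mul_pos (by exact_mod_cast hd) (hG (k+1) (by omega) le_rfl)
    · intro m
      rcases Nat.lt_or_ge (Multiset.card t + 1) (m + (m0+1)) with hbig | hsm
      · rw [hqdef, Polynomial.coeff_iterate_derivative, nsmul_eq_mul, hPdef,
          coeff_pm_zero_of_gt _ (by rw [Multiset.card_cons]; omega), mul_zero]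
      · rw [hqc m (by omega)]
        rcases Nat.lt_or_ge m (k+1) with hmk | hmk
        · have hd : 0 < (m + (m0+1)).descFactorial (m0+1) := Nat.pos_of_ne_zero (fun hdz => by have := Nat.descFactorial_eq_zero_iff_lt.mp hdz; omega)
          exact le_of_lt (mul_pos (by exact_mod_cast hd) (hG (k+1-m) (by omega) (by omega)))
        · have he : k + 1 - m = 0 := by omega
          rw [he, esymm_zero', mul_one]
          positivity
  have hevalq : q.eval r = (r + a) * g.eval r + ((m0 : ℝ) + 1) * hh.eval r := by
    rw [hqsplit]
    simp [eval_mul, eval_add]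
  have hhr : 0 < hh.eval r := by
    rw [hevalq, hgr, mul_zero, zero_add] at hqpos
    nlinarith [hqpos, Nat.cast_nonneg (α := ℝ) m0]
  -- all roots of hh are < r
  have hrootslt : ∀ ρ ∈ hh.roots, ρ < r := by
    intro ρ hρ
    have hisroot : hh.eval ρ = 0 := (Polynomial.mem_roots'.mp hρ).2
    by_contra hge
    push_neg at hge
    rcases eq_or_lt_of_le hge with heq | hlt
    · rw [← heq] at hisroot; linarith
    · obtain ⟨ξ, hξ, hslope⟩ := exists_hasDerivAt_eq_slope (fun x => hh.eval x)
        (fun x => g.eval x) hlt ((Polynomial.continuous hh).continuousOn)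
        (fun x _ => by rw [hgh]; exact Polynomial.hasDerivAt hh x)
      have hslope' : g.eval ξ = (hh.eval ρ - hh.eval r) / (ρ - r) := hslope
      have h1 : g.eval ξ < 0 := by
        rw [hslope', hisroot]
        apply div_neg_of_neg_of_pos <;> linarith
      have h2 : g.eval r ≤ g.eval ξ := eval_mono_of_coeff g hr0 (le_of_lt hξ.1) hgm
      rw [hgr] at h2
      linarith
  -- final contradiction
  have hfac := Polynomial.C_leadingCoeff_mul_prod_multiset_X_sub_C (p := hh)
    (by rw [hhroots, hhdeg])
  have hmne : hh.roots ≠ 0 := by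
    intro h0
    rw [h0] at hhroots
    simp at hhroots
  have hpos := (eval_prod_pos_and_deriv r hh.roots hrootslt hh.leadingCoeff hhlead).2 hmne
  rw [hfac, ← hgh] at hpos
  rw [hgr] at hpos
  exact lt_irrefl 0 hpos


lemma all_pos_of_garding_full (s : Multiset ℝ)
    (hs : ∀ j, 1 ≤ j → j ≤ Multiset.card s → 0 < s.esymm j) :
    ∀ x ∈ s, 0 < x := by
  intro x hx
  by_contra hxle
  push_neg at hxle
  have hne : s ≠ 0 := fun h0 => by simp [h0] at hx
  have hcardpos : 1 ≤ Multiset.card s := Multiset.card_pos.mpr hne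
  have hcoeff0 : 0 < (pm s).coeff 0 := by
    rw [coeff_pm s (Nat.zero_le _), Nat.sub_zero]
    exact hs _ hcardpos le_rfl
  have hcoeffnn : ∀ m, 0 ≤ (pm s).coeff m := by
    intro m
    rcases Nat.lt_or_ge (Multiset.card s) m with hbig | hsm
    · rw [coeff_pm_zero_of_gt s hbig]
    · rw [coeff_pm s hsm]
      rcases Nat.eq_or_lt_of_le hsm with heq | hlt
      · have he : Multiset.card s - m = 0 := by omega
        rw [he, esymm_zero']; norm_num
      · exact le_of_lt (hs _ (by omega) (by omega))
  have hpos := eval_pos_of_coeff (pm s) (x := -x) (by linarith) hcoeff0 hcoeffnn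
  have hzero : (pm s).eval (-x) = 0 := by
    rw [← Multiset.cons_erase hx, pm_cons, eval_mul]
    simp
  rw [hzero] at hpos
  exact lt_irrefl 0 hpos

lemma remove_esymm (k : ℕ) (a : ℝ) (t : Multiset ℝ)
    (hk : k ≤ Multiset.card (a ::ₘ t))
    (hG : ∀ j, 1 ≤ j → j ≤ k → 0 < (a ::ₘ t).esymm j) :
    ∀ j, j ≤ k - 1 → 0 < t.esymm j := by
  induction k with
  | zero =>
    intro j hj
    have : j = 0 := by omega
    rw [this, esymm_zero']
    norm_num
  | succ k ih =>
    intro j hj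
    rcases Nat.eq_zero_or_pos j with rfl | hj1
    · rw [esymm_zero']; norm_num
    rcases Nat.lt_or_ge j k with hjk | hjk
    · exact ih (by rw [Multiset.card_cons] at hk ⊢; omega)
        (fun j' h1 h2 => hG j' h1 (by omega)) j (by omega)
    · have hjek : j = k := by omega
      subst hjek
      rcases Nat.lt_or_ge (j + 1) (Multiset.card (a ::ₘ t)) with hlt | hge
      · apply key_step j hj1 a t (by rw [Multiset.card_cons] at hlt; omega) hG
        intro j' hj'
        exact ih (by omega) (fun m h1 h2 => hG m h1 (by omega)) j' hj'
      · have hcardeq : Multiset.card (a ::ₘ t) = j + 1 := le_antisymm hge hk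
        have hpos := all_pos_of_garding_full (a ::ₘ t) (by rw [hcardeq]; exact hG)
        apply esymm_pos_of_pos t (fun x hx => hpos x (Multiset.mem_cons_of_mem hx))
        rw [Multiset.card_cons] at hcardeq
        omega

lemma mono_swap (k : ℕ) (hk1 : 1 ≤ k) (a b : ℝ) (t : Multiset ℝ) (hab : a ≤ b)
    (hk : k ≤ Multiset.card (a ::ₘ t))
    (hG : ∀ j, 1 ≤ j → j ≤ k → 0 < (a ::ₘ t).esymm j) :
    ∀ j, 1 ≤ j → j ≤ k → 0 < (b ::ₘ t).esymm j := by
  have hrem := remove_esymm k a t hk hG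
  intro j hj1 hjk
  obtain ⟨j', rfl⟩ : ∃ j', j = j' + 1 := ⟨j - 1, by omega⟩
  rw [esymm_cons]
  have h1 := hG (j' + 1) hj1 hjk
  rw [esymm_cons] at h1
  have h2 : 0 < t.esymm j' := hrem j' (by omega)
  nlinarith

lemma map_univ_cons {N : ℕ} (f : Fin N → ℝ) (i : Fin N) :
    Multiset.map f Finset.univ.val = f i ::ₘ Multiset.map f ((Finset.univ.erase i).val) := by
  rw [Finset.erase_val]
  conv_lhs => rw [← Multiset.cons_erase (Finset.mem_univ_val i : i ∈ Finset.univ.val)]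
  rw [Multiset.map_cons]

lemma card_univ_val {N : ℕ} : Multiset.card (Finset.univ.val : Multiset (Fin N)) = N := by
  rw [← Finset.card_def, Finset.card_univ, Fintype.card_fin]

lemma card_cons_erase {N : ℕ} (x : ℝ) (f : Fin N → ℝ) (i : Fin N) :
    Multiset.card (x ::ₘ Multiset.map f ((Finset.univ.erase i).val)) = N := by
  have h1 := congrArg Multiset.card (map_univ_cons f i)
  rw [Multiset.card_map, Multiset.card_cons, Multiset.card_map, card_univ_val] at h1
  rw [Multiset.card_cons, Multiset.card_map]
  omega

lemma mono_tuple {N k : ℕ} (hk1 : 1 ≤ k) (hkN : k ≤ N) (lam mu : Fin N → ℝ)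
    (hle : ∀ i, lam i ≤ mu i)
    (hG : ∀ j, 1 ≤ j → j ≤ k → 0 < (Multiset.map lam Finset.univ.val).esymm j) :
    ∀ j, 1 ≤ j → j ≤ k → 0 < (Multiset.map mu Finset.univ.val).esymm j := by
  classical
  have key : ∀ s : Finset (Fin N), ∀ j, 1 ≤ j → j ≤ k →
      0 < (Multiset.map (fun i => if i ∈ s then mu i else lam i) Finset.univ.val).esymm j := by
    intro s
    induction s using Finset.induction with
    | empty => simpa using hG
    | insert i s hnotmem ih =>
      intro j hj1 hjk
      have hcongr : Multiset.map (fun x => if x ∈ insert i s then mu x else lam x)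
            ((Finset.univ.erase i).val)
          = Multiset.map (fun x => if x ∈ s then mu x else lam x)
            ((Finset.univ.erase i).val) := by
        apply Multiset.map_congr rfl
        intro x hx
        have hxi : x ≠ i := by
          rw [Finset.mem_val, Finset.mem_erase] at hx
          exact hx.1
        simp [Finset.mem_insert, hxi]
      rw [map_univ_cons _ i, hcongr, if_pos (Finset.mem_insert_self i s)]
      apply mono_swap k hk1 (lam i) (mu i) _ (hle i)
        (by rw [card_cons_erase]; exact hkN) ?_ j hj1 hjk
      intro j' h1 h2
      have h3 := ih j' h1 h2
      rw [map_univ_cons _ i, if_neg hnotmem] at h3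
      exact h3
  intro j hj1 hjk
  have := key Finset.univ j hj1 hjk
  simpa using this


/-! ### Phase B : eigenvalue counting under PSD perturbation -/

section PhaseB

variable {n : ℕ}

lemma re_dot_self_pos (x : Fin n → ℂ) (hx : x ≠ 0) : 0 < (star x ⬝ᵥ x).re := by
  rw [dotProduct, Complex.re_sum]
  have hterm : ∀ i, (star x i * x i).re = Complex.normSq (x i) := fun i => by
    simp only [Pi.star_apply]
    rw [show star (x i) = (starRingEnd ℂ) (x i) from rfl, mul_comm, Complex.mul_conj]
    exact Complex.ofReal_re _
  rw [Finset.sum_congr rfl (fun i _ => hterm i)]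
  obtain ⟨i, hi⟩ := Function.ne_iff.mp hx
  exact Finset.sum_pos' (fun i _ => Complex.normSq_nonneg _)
    ⟨i, Finset.mem_univ i, Complex.normSq_pos.mpr hi⟩

lemma spectral_sums {ι : Type*} [Fintype ι]
    (M : Matrix (Fin n) (Fin n) ℂ)
    (v : ι → EuclideanSpace ℂ (Fin n)) (hon : Orthonormal ℂ v)
    (μ : ι → ℝ) (hMv : ∀ i, M *ᵥ (v i : Fin n → ℂ) = (μ i : ℂ) • (v i : Fin n → ℂ))
    (c : ι → ℂ) (x : EuclideanSpace ℂ (Fin n)) (hx : ∑ i, c i • v i = x) :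
    (star (x : Fin n → ℂ) ⬝ᵥ (x : Fin n → ℂ)).re = ∑ i, Complex.normSq (c i) ∧
      (star (x : Fin n → ℂ) ⬝ᵥ (M *ᵥ (x : Fin n → ℂ))).re
        = ∑ i, Complex.normSq (c i) * μ i := by
  classical
  subst hx
  constructor
  · have h1 : star ((∑ i, c i • v i : EuclideanSpace ℂ (Fin n)) : Fin n → ℂ) ⬝ᵥ
        ((∑ i, c i • v i : EuclideanSpace ℂ (Fin n)) : Fin n → ℂ)
        = (inner ℂ (∑ i, c i • v i) (∑ i, c i • v i : EuclideanSpace ℂ (Fin n)) : ℂ) := by rw [EuclideanSpace.inner_eq_star_dotProduct, dotProduct_comm]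
    rw [h1, hon.inner_sum c c Finset.univ, Complex.re_sum]
    apply Finset.sum_congr rfl
    intro i _
    rw [mul_comm, Complex.mul_conj]
    exact Complex.ofReal_re _
  · have hM : M *ᵥ ((∑ i, c i • v i : EuclideanSpace ℂ (Fin n)) : Fin n → ℂ)
        = ((∑ i, (c i * (μ i : ℂ)) • v i : EuclideanSpace ℂ (Fin n)) : Fin n → ℂ) := by
      rw [show ((∑ i, c i • v i : EuclideanSpace ℂ (Fin n)) : Fin n → ℂ)
          = ∑ i, c i • (v i : Fin n → ℂ) from by simp [WithLp.ofLp_sum, WithLp.ofLp_smul],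
        show ((∑ i, (c i * (μ i : ℂ)) • v i : EuclideanSpace ℂ (Fin n)) : Fin n → ℂ)
          = ∑ i, (c i * (μ i : ℂ)) • (v i : Fin n → ℂ) from by simp [WithLp.ofLp_sum, WithLp.ofLp_smul],
        ← Matrix.mulVecLin_apply, map_sum]
      apply Finset.sum_congr rfl
      intro i _
      rw [LinearMap.map_smul, Matrix.mulVecLin_apply, hMv i, smul_smul]
    rw [hM]
    have h2 : star ((∑ i, c i • v i : EuclideanSpace ℂ (Fin n)) : Fin n → ℂ) ⬝ᵥ
        ((∑ i, (c i * (μ i : ℂ)) • v i : EuclideanSpace ℂ (Fin n)) : Fin n → ℂ)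
        = (inner ℂ (∑ i, c i • v i)
            (∑ i, (c i * (μ i : ℂ)) • v i : EuclideanSpace ℂ (Fin n)) : ℂ) := by rw [EuclideanSpace.inner_eq_star_dotProduct, dotProduct_comm]
    rw [h2, hon.inner_sum c _ Finset.univ, Complex.re_sum]
    apply Finset.sum_congr rfl
    intro i _
    rw [← mul_assoc, mul_comm (starRingEnd ℂ (c i)) (c i), Complex.mul_conj,
      ← Complex.ofReal_mul]
    exact Complex.ofReal_re _

lemma weyl_count (A C : Matrix (Fin n) (Fin n) ℂ) (hA : A.IsHermitian)
    (hC : C.PosSemidef) (hAC : (A + C).IsHermitian) (a : ℝ) :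
    (Finset.univ.filter fun i => hAC.eigenvalues i < a).card ≤
      (Finset.univ.filter fun i => hA.eigenvalues i < a).card := by
  classical
  by_contra hlt
  push_neg at hlt
  set S : Finset (Fin n) := Finset.univ.filter (fun i => ¬ hA.eigenvalues i < a) with hS
  set T : Finset (Fin n) := Finset.univ.filter (fun i => hAC.eigenvalues i < a) with hT
  have hcardS : (Finset.univ.filter fun i => hA.eigenvalues i < a).card + S.card = n := by
    rw [hS, Finset.card_filter_add_card_filter_not, Finset.card_univ, Fintype.card_fin]
  set vA : {i // i ∈ S} → EuclideanSpace ℂ (Fin n) := (fun i => hA.eigenvectorBasis i.1) with hvA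
  set vT : {i // i ∈ T} → EuclideanSpace ℂ (Fin n) := (fun i => hAC.eigenvectorBasis i.1) with hvT
  have honA : Orthonormal ℂ vA :=
    hA.eigenvectorBasis.orthonormal.comp _ Subtype.val_injective
  have honT : Orthonormal ℂ vT :=
    hAC.eigenvectorBasis.orthonormal.comp _ Subtype.val_injective
  set V := Submodule.span ℂ (Set.range vA) with hV
  set W := Submodule.span ℂ (Set.range vT) with hW
  have hdimV : Module.finrank ℂ V = S.card := by
    rw [hV, finrank_span_eq_card honA.linearIndependent, Fintype.card_coe]
  have hdimW : Module.finrank ℂ W = T.card := by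
    rw [hW, finrank_span_eq_card honT.linearIndependent, Fintype.card_coe]
  have hsum := Submodule.finrank_sup_add_finrank_inf_eq V W
  have hVW : Module.finrank ℂ (V ⊔ W : Submodule ℂ (EuclideanSpace ℂ (Fin n))) ≤ n :=
    le_trans (Submodule.finrank_le _) (le_of_eq finrank_euclideanSpace_fin)
  have hposrank : 0 < Module.finrank ℂ (V ⊓ W : Submodule ℂ (EuclideanSpace ℂ (Fin n))) := by
    rw [hdimV, hdimW] at hsum
    omega
  obtain ⟨x, hxmem, hxne⟩ : ∃ x ∈ V ⊓ W, x ≠ (0 : EuclideanSpace ℂ (Fin n)) := by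
    by_contra hno
    push_neg at hno
    have : (V ⊓ W : Submodule ℂ (EuclideanSpace ℂ (Fin n))) = ⊥ :=
      (Submodule.eq_bot_iff _).mpr hno
    rw [this, finrank_bot] at hposrank
    exact lt_irrefl 0 hposrank
  obtain ⟨cA, hcA⟩ := (Submodule.mem_span_range_iff_exists_fun ℂ).mp (Submodule.mem_inf.mp hxmem).1
  obtain ⟨cT, hcT⟩ := (Submodule.mem_span_range_iff_exists_fun ℂ).mp (Submodule.mem_inf.mp hxmem).2
  have hMvA : ∀ i : {i // i ∈ S}, A *ᵥ (vA i : Fin n → ℂ)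
      = (hA.eigenvalues i.1 : ℂ) • (vA i : Fin n → ℂ) := fun i => by
    have := hA.mulVec_eigenvectorBasis i.1
    exact_mod_cast this
  have hMvT : ∀ i : {i // i ∈ T}, (A + C) *ᵥ (vT i : Fin n → ℂ)
      = (hAC.eigenvalues i.1 : ℂ) • (vT i : Fin n → ℂ) := fun i => by
    have := hAC.mulVec_eigenvectorBasis i.1
    exact_mod_cast this
  obtain ⟨hNA, hQA⟩ := spectral_sums A vA honA (fun i => hA.eigenvalues i.1) hMvA cA x hcA
  obtain ⟨hNT, hQT⟩ := spectral_sums (A + C) vT honT (fun i => hAC.eigenvalues i.1) hMvT cT x hcT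
  set xf : Fin n → ℂ := (x : Fin n → ℂ) with hxf
  have hNpos : 0 < (star xf ⬝ᵥ xf).re := re_dot_self_pos xf (by rwa [hxf, ne_eq, WithLp.ofLp_eq_zero])
  -- lower bound on A side
  have hlow : a * (star xf ⬝ᵥ xf).re ≤ (star xf ⬝ᵥ (A *ᵥ xf)).re := by
    rw [hQA, hNA, Finset.mul_sum]
    apply Finset.sum_le_sum
    intro i _
    rw [mul_comm]
    apply mul_le_mul_of_nonneg_left _ (Complex.normSq_nonneg _)
    exact le_of_not_gt (Finset.mem_filter.mp i.2).2
  -- strict upper bound on A + C side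
  have hupp : (star xf ⬝ᵥ ((A + C) *ᵥ xf)).re < a * (star xf ⬝ᵥ xf).re := by
    rw [hQT, hNT, Finset.mul_sum]
    have hex : ∃ i : {i // i ∈ T}, cT i ≠ 0 := by
      by_contra hall
      push_neg at hall
      rw [hNT] at hNpos
      have : ∑ i, Complex.normSq (cT i) = 0 := by
        apply Finset.sum_eq_zero
        intro i _
        rw [hall i, map_zero]
      rw [this] at hNpos
      exact lt_irrefl 0 hNpos
    obtain ⟨i0, hi0⟩ := hex
    apply Finset.sum_lt_sum
    · intro i _
      rw [mul_comm a]
      apply mul_le_mul_of_nonneg_left _ (Complex.normSq_nonneg _)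
      exact le_of_lt (Finset.mem_filter.mp i.2).2
    · refine ⟨i0, Finset.mem_univ i0, ?_⟩
      rw [mul_comm a]
      apply mul_lt_mul_of_pos_left _ (Complex.normSq_pos.mpr hi0)
      exact (Finset.mem_filter.mp i0.2).2
  -- monotonicity in C
  have hsplit : star xf ⬝ᵥ ((A + C) *ᵥ xf) = star xf ⬝ᵥ (A *ᵥ xf) + star xf ⬝ᵥ (C *ᵥ xf) := by
    rw [Matrix.add_mulVec, dotProduct_add]
  have hQC : 0 ≤ (star xf ⬝ᵥ (C *ᵥ xf)).re := by
    have := hC.re_dotProduct_nonneg xf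
    simpa [RCLike.re_to_complex] using this
  have : (star xf ⬝ᵥ (A *ᵥ xf)).re ≤ (star xf ⬝ᵥ ((A + C) *ᵥ xf)).re := by
    rw [hsplit, Complex.add_re]
    linarith
  linarith

end PhaseB


/-! ### sorting and counting bridge -/

lemma card_filter_comp {N : ℕ} (f : Fin N → ℝ) (p : ℝ → Prop) [DecidablePred p]
    (e : Equiv.Perm (Fin N)) :
    (Finset.univ.filter fun i => p (f (e i))).card
      = (Finset.univ.filter fun i => p (f i)).card := by
  apply Finset.card_bij (fun i _ => e i)
  · intro i hi
    rw [Finset.mem_filter] at hi ⊢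
    exact ⟨Finset.mem_univ _, hi.2⟩
  · intro i _ j _ h
    exact e.injective h
  · intro j hj
    refine ⟨e.symm j, ?_, by simp⟩
    rw [Finset.mem_filter] at hj ⊢
    exact ⟨Finset.mem_univ _, by simpa using hj.2⟩

lemma sorted_dominates {N : ℕ} (lam mu : Fin N → ℝ)
    (hcount : ∀ a : ℝ, (Finset.univ.filter fun i => mu i < a).card
       ≤ (Finset.univ.filter fun i => lam i < a).card)
    (hlam : Monotone lam) (hmu : Monotone mu) : ∀ i, lam i ≤ mu i := by
  intro i
  by_contra hgt
  push_neg at hgt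
  have h1 : Finset.Iic i ⊆ Finset.univ.filter (fun j => mu j < lam i) := by
    intro j hj
    rw [Finset.mem_filter]
    exact ⟨Finset.mem_univ _, lt_of_le_of_lt (hmu (Finset.mem_Iic.mp hj)) hgt⟩
  have h2 : Finset.univ.filter (fun j => lam j < lam i) ⊆ Finset.Iio i := by
    intro j hj
    rw [Finset.mem_filter] at hj
    rw [Finset.mem_Iio]
    by_contra hge
    push_neg at hge
    exact absurd (hlam hge) (not_le.mpr hj.2)
  have c1 := Finset.card_le_card h1
  have c2 := Finset.card_le_card h2
  rw [Fin.card_Iic] at c1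
  rw [Fin.card_Iio] at c2
  have := hcount (lam i)
  omega

lemma map_perm_univ {N : ℕ} (f : Fin N → ℝ) (e : Equiv.Perm (Fin N)) :
    Multiset.map (f ∘ e) Finset.univ.val = Multiset.map f Finset.univ.val := by
  rw [← Multiset.map_map]
  congr 1
  calc Multiset.map (⇑e) Finset.univ.val = (Finset.univ.map e.toEmbedding).val := by
        rw [Finset.map_val, Equiv.coe_toEmbedding]
  _ = Finset.univ.val := by rw [Finset.map_univ_equiv]

end GardingAux


/-- The Gårding cone is stable under addition of a positive semidefinite matrix:
if the Hermitian matrix `A` lies in `Γ_k^+` and `C` is Hermitian positive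
semidefinite, then `A + C` lies in `Γ_k^+`. -/
theorem gardingCone_add_posSemidef {n : ℕ} (k : ℕ) (hk1 : 1 ≤ k) (hk : k ≤ n)
    (A C : Matrix (Fin n) (Fin n) ℂ) (hA : A.IsHermitian)
    (hAk : ∀ j, 1 ≤ j → j ≤ k → 0 < sigmaH hA j)
    (hC : C.PosSemidef) (hAC : (A + C).IsHermitian) :
    ∀ j, 1 ≤ j → j ≤ k → 0 < sigmaH hAC j := by
  classical
  intro j hj1 hjk
  have hcount := GardingAux.weyl_count A C hA hC hAC
  set lam := hA.eigenvalues with hlam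
  set mu := hAC.eigenvalues with hmu
  set e1 := Tuple.sort lam with he1
  set e2 := Tuple.sort mu with he2
  have hmono1 : Monotone (lam ∘ e1) := Tuple.monotone_sort lam
  have hmono2 : Monotone (mu ∘ e2) := Tuple.monotone_sort mu
  have hcount' : ∀ a : ℝ, (Finset.univ.filter fun i => (mu ∘ e2) i < a).card
      ≤ (Finset.univ.filter fun i => (lam ∘ e1) i < a).card := by
    intro a
    rw [show (Finset.univ.filter fun i => (mu ∘ e2) i < a)
        = (Finset.univ.filter fun i => (fun t => t < a) (mu (e2 i))) from rfl,
      GardingAux.card_filter_comp mu (fun t => t < a) e2,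
      show (Finset.univ.filter fun i => (lam ∘ e1) i < a)
        = (Finset.univ.filter fun i => (fun t => t < a) (lam (e1 i))) from rfl,
      GardingAux.card_filter_comp lam (fun t => t < a) e1]
    exact hcount a
  have hdom := GardingAux.sorted_dominates (lam ∘ e1) (mu ∘ e2) hcount' hmono1 hmono2
  have hGlam : ∀ j', 1 ≤ j' → j' ≤ k →
      0 < (Multiset.map (lam ∘ e1) Finset.univ.val).esymm j' := by
    intro j' h1 h2
    rw [GardingAux.map_perm_univ lam e1, ← GardingAux.sigmaH_eq_esymm hA]
    exact hAk j' h1 h2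
  have hres := GardingAux.mono_tuple hk1 hk (lam ∘ e1) (mu ∘ e2) hdom hGlam j hj1 hjk
  rw [GardingAux.map_perm_univ mu e2, ← GardingAux.sigmaH_eq_esymm hAC] at hres
  exact hres
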